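/- The largest real root of t^6 - t^4 - t^3 - t^2 + 1 equals the largest real root of t^8 - t^7 - t^4 - t + 1 (both Laurent-cleared forms of LT_{(1,3)} and LT_{(3,4)} respectively); i.e., λ_{(1,3)} = λ_{(3,4)}. -/

import Mathlib

/-- The largest real root of `t^6 - t^4 - t^3 - t^2 + 1` equals the
largest real root of `t^8 - t^7 - t^4 - t + 1`, i.e. `λ_{(1,3)} = λ_{(3,4)}`. -/
theorem stmt_9 :
    ∃ x : ℝ,
      (x^6 - x^4 - x^3 - x^2 + 1 = 0 ∧
        ∀ y : ℝ, y^6 - y^4 - y^3 - y^2 + 1 = 0 → y ≤ x) ∧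
      (x^8 - x^7 - x^4 - x + 1 = 0 ∧
        ∀ y : ℝ, y^8 - y^7 - y^4 - y + 1 = 0 → y ≤ x) := by
  -- relation between the two polynomials
  have key : ∀ y : ℝ, (y^8 - y^7 - y^4 - y + 1 = 0) ↔ (y^6 - y^4 - y^3 - y^2 + 1 = 0) := by
    intro y
    have hpos : y^2 - y + 1 > 0 := by nlinarith [sq_nonneg (y - 1/2)]
    have hfac : y^8 - y^7 - y^4 - y + 1 = (y^2 - y + 1) * (y^6 - y^4 - y^3 - y^2 + 1) := by
      ring
    constructor
    · intro h
      rw [hfac] at h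
      rcases mul_eq_zero.mp h with h' | h'
      · exact absurd h' (ne_of_gt hpos)
      · exact h'
    · intro h
      rw [hfac, h, mul_zero]
  -- the sextic as a polynomial
  set P : Polynomial ℝ :=
    Polynomial.X^6 - Polynomial.X^4 - Polynomial.X^3 - Polynomial.X^2 + 1 with hP
  have hEval : ∀ y : ℝ, P.eval y = y^6 - y^4 - y^3 - y^2 + 1 := by
    intro y; simp [hP]
  have hPne : P ≠ 0 := by
    intro h
    have := hEval 0
    rw [h] at this
    norm_num at this
  have hfin : {y : ℝ | P.IsRoot y}.Finite := Polynomial.finite_setOf_isRoot hPne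
  -- a root exists in [1,2] by IVT
  have hcont : Continuous fun y : ℝ => y^6 - y^4 - y^3 - y^2 + 1 := by continuity
  have hIVT : ∃ x ∈ Set.Icc (1:ℝ) 2, x^6 - x^4 - x^3 - x^2 + 1 = 0 := by
    have h1 : (1:ℝ)^6 - 1^4 - 1^3 - 1^2 + 1 = -1 := by norm_num
    have h2 : (2:ℝ)^6 - 2^4 - 2^3 - 2^2 + 1 = 37 := by norm_num
    have := intermediate_value_Icc (by norm_num : (1:ℝ) ≤ 2) hcont.continuousOn
    have hmem : (0:ℝ) ∈ Set.Icc ((fun y : ℝ => y^6 - y^4 - y^3 - y^2 + 1) 1)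
        ((fun y : ℝ => y^6 - y^4 - y^3 - y^2 + 1) 2) := by
      simp only []
      rw [Set.mem_Icc]
      norm_num
    obtain ⟨x, hx, hx0⟩ := this hmem
    exact ⟨x, hx, hx0⟩
  obtain ⟨x0, _, hx0⟩ := hIVT
  have hne : {y : ℝ | P.IsRoot y}.Nonempty := ⟨x0, by simp [Polynomial.IsRoot, hEval, hx0]⟩
  obtain ⟨x, hxmem, hxmax'⟩ := Set.Finite.exists_maximalFor id _ hfin hne
  have hxmax : ∀ y ∈ {y : ℝ | P.IsRoot y}, x ≤ y → x = y := fun y hy h => le_antisymm h (hxmax' hy h)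
  have hxroot : x^6 - x^4 - x^3 - x^2 + 1 = 0 := by
    have := hxmem; rwa [Set.mem_setOf_eq, Polynomial.IsRoot, hEval] at this
  have hmax : ∀ y : ℝ, y^6 - y^4 - y^3 - y^2 + 1 = 0 → y ≤ x := by
    intro y hy
    have hymem : y ∈ {y : ℝ | P.IsRoot y} := by
      simp [Polynomial.IsRoot, hEval, hy]
    by_contra hlt
    push_neg at hlt
    have := hxmax y hymem (le_of_lt hlt)
    exact absurd this (ne_of_lt hlt)
  refine ⟨x, ⟨hxroot, hmax⟩, ⟨(key x).mpr hxroot, fun y hy => hmax y ((key y).mp hy)⟩⟩
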